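/- Let a, b ∈ ℂ and define the Todd function f(z) = (exp(a·z) − exp(b·z))/(a·exp(b·z) − b·exp(a·z)) on the open set U = {z ∈ ℂ : a·exp(b·z) − b·exp(a·z) ≠ 0}. Then f is holomorphic on U and at every point of U it satisfies f·f''' − 3·f'·f'' = 6q_1·(f')² + 12q_2·f·f' + 12q_3·f², where −2q_1 = a + b, 12q_2 = (a − b)², and q_3 = 0; equivalently, f·f''' − 3·f'·f'' = −3(a + b)·(f')² + (a − b)²·f·f'. -/

import Mathlib

open Complex

/-- The Todd function `f(z) = (e^{az} - e^{bz})/(a e^{bz} - b e^{az})` is holomorphic away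
from the zeros of the denominator and satisfies the Hirzebruch differential equation there,
with parameters `-2q₁ = a + b`, `12 q₂ = (a - b)²`, `q₃ = 0`:
`f f''' - 3 f' f'' = -3(a + b)(f')² + (a - b)² f f'`. -/
theorem todd_function_satisfies_ODE (a b : ℂ)
    (f : ℂ → ℂ)
    (hf : ∀ z : ℂ, f z = (Complex.exp (a * z) - Complex.exp (b * z)) /
      (a * Complex.exp (b * z) - b * Complex.exp (a * z)))
    (U : Set ℂ)
    (hU : U = {z : ℂ | a * Complex.exp (b * z) - b * Complex.exp (a * z) ≠ 0}) :
    (∀ z ∈ U, AnalyticAt ℂ f z) ∧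
      ∀ z ∈ U,
        f z * deriv (deriv (deriv f)) z - 3 * deriv f z * deriv (deriv f) z
          = -3 * (a + b) * (deriv f z) ^ 2 + (a - b) ^ 2 * f z * deriv f z := by
  have hfe : f = fun z => (Complex.exp (a * z) - Complex.exp (b * z)) /
      (a * Complex.exp (b * z) - b * Complex.exp (a * z)) := funext hf
  set s : ℂ := a + b with hs
  set p : ℂ := a * b with hp
  -- analyticity of numerator and denominator
  have hEa : ∀ z : ℂ, AnalyticAt ℂ (fun w => Complex.exp (a * w)) z := fun z =>
    (analyticAt_const.mul analyticAt_id).cexp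
  have hEb : ∀ z : ℂ, AnalyticAt ℂ (fun w => Complex.exp (b * w)) z := fun z =>
    (analyticAt_const.mul analyticAt_id).cexp
  have hNa : ∀ z : ℂ, AnalyticAt ℂ (fun w => Complex.exp (a * w) - Complex.exp (b * w)) z :=
    fun z => (hEa z).sub (hEb z)
  have hDa : ∀ z : ℂ,
      AnalyticAt ℂ (fun w => a * Complex.exp (b * w) - b * Complex.exp (a * w)) z :=
    fun z => (analyticAt_const.mul (hEb z)).sub (analyticAt_const.mul (hEa z))
  have hUopen : IsOpen U := by
    rw [hU]
    have hc : Continuous (fun w => a * Complex.exp (b * w) - b * Complex.exp (a * w)) := by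
      continuity
    exact isOpen_compl_singleton.preimage hc
  have hzD : ∀ z ∈ U, a * Complex.exp (b * z) - b * Complex.exp (a * z) ≠ 0 := by
    intro z hz; rw [hU] at hz; exact hz
  -- f is analytic on U
  have hfa : ∀ z ∈ U, AnalyticAt ℂ f z := by
    intro z hz
    rw [hfe]
    exact (hNa z).div (hDa z) (hzD z hz)
  refine ⟨hfa, ?_⟩
  have hF : ∀ z ∈ U, HasDerivAt f (deriv f z) z := fun z hz =>
    ((hfa z hz).differentiableAt).hasDerivAt
  set g : ℂ → ℂ := fun w => 1 + s * f w + p * (f w) ^ 2 with hg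
  -- Riccati equation: deriv f = g on U
  have hR : ∀ z ∈ U, deriv f z = g z := by
    intro z hz
    have hea : HasDerivAt (fun w => Complex.exp (a * w)) (Complex.exp (a * z) * a) z :=
      by simpa using ((hasDerivAt_id z).const_mul a).cexp
    have heb : HasDerivAt (fun w => Complex.exp (b * w)) (Complex.exp (b * z) * b) z :=
      by simpa using ((hasDerivAt_id z).const_mul b).cexp
    have hN' : HasDerivAt (fun w => Complex.exp (a * w) - Complex.exp (b * w))
        (Complex.exp (a * z) * a - Complex.exp (b * z) * b) z := hea.sub heb
    have hD' : HasDerivAt (fun w => a * Complex.exp (b * w) - b * Complex.exp (a * w))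
        (a * (Complex.exp (b * z) * b) - b * (Complex.exp (a * z) * a)) z :=
      (heb.const_mul a).sub (hea.const_mul b)
    have hdf : HasDerivAt f
        (((Complex.exp (a * z) * a - Complex.exp (b * z) * b) *
            (a * Complex.exp (b * z) - b * Complex.exp (a * z)) -
          (Complex.exp (a * z) - Complex.exp (b * z)) *
            (a * (Complex.exp (b * z) * b) - b * (Complex.exp (a * z) * a))) /
          (a * Complex.exp (b * z) - b * Complex.exp (a * z)) ^ 2) z := by
      rw [hfe]
      exact hN'.div hD' (hzD z hz)
    rw [hdf.deriv, hg]
    simp only [hf z, hs, hp]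
    have hD0 := hzD z hz
    have hD1 : a * Complex.exp (z * b) - Complex.exp (a * z) * b ≠ 0 := by
      rwa [mul_comm z b, mul_comm (Complex.exp (a * z)) b]
    field_simp
    ring
  -- second derivative
  have hEq1 : ∀ z ∈ U, deriv f =ᶠ[nhds z] g := fun z hz =>
    Filter.eventuallyEq_of_mem (hUopen.mem_nhds hz) hR
  have hG : ∀ z ∈ U, HasDerivAt g (s * deriv f z + p * (2 * f z * deriv f z)) z := by
    intro z hz
    have h1 := ((hasDerivAt_const z (1 : ℂ)).add ((hF z hz).const_mul s)).add
      (((hF z hz).pow 2).const_mul p)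
    refine h1.congr_deriv ?_
    norm_num
  have hd2 : ∀ z ∈ U, deriv (deriv f) z = s * deriv f z + p * (2 * f z * deriv f z) := by
    intro z hz
    rw [(hEq1 z hz).deriv_eq, (hG z hz).deriv]
  -- third derivative
  set g2 : ℂ → ℂ := fun w => s * g w + 2 * p * (f w * g w) with hg2
  have hdg_eq : ∀ z ∈ U, deriv g z = g2 z := by
    intro z hz
    rw [(hG z hz).deriv, hg2]
    simp only
    rw [← hR z hz]
    ring
  have hEq2 : ∀ z ∈ U, deriv g =ᶠ[nhds z] g2 := fun z hz =>
    Filter.eventuallyEq_of_mem (hUopen.mem_nhds hz) hdg_eq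
  have hEq3 : ∀ z ∈ U, deriv (deriv f) =ᶠ[nhds z] deriv g := by
    intro z hz
    refine Filter.eventuallyEq_of_mem (hUopen.mem_nhds hz) (fun w hw => ?_)
    exact (hEq1 w hw).deriv_eq
  have hG2 : ∀ z ∈ U, HasDerivAt g2
      (s * (s * deriv f z + p * (2 * f z * deriv f z)) +
        2 * p * (deriv f z * g z + f z * (s * deriv f z + p * (2 * f z * deriv f z)))) z := by
    intro z hz
    exact ((hG z hz).const_mul s).add (((hF z hz).mul (hG z hz)).const_mul (2 * p))
  have hd3 : ∀ z ∈ U, deriv (deriv (deriv f)) z =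
      s * (s * deriv f z + p * (2 * f z * deriv f z)) +
        2 * p * (deriv f z * g z + f z * (s * deriv f z + p * (2 * f z * deriv f z))) := by
    intro z hz
    rw [(hEq3 z hz).deriv_eq, (hEq2 z hz).deriv_eq, (hG2 z hz).deriv]
  -- final computation
  intro z hz
  have hRz := hR z hz
  rw [hd2 z hz, hd3 z hz]
  simp only [hg] at hRz ⊢
  linear_combination (-6 * p * f z * deriv f z) * hRz
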